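/- The function β ↦ I_β := √β ∫_ℝ (2π)^{-1/2} e^{−β(cosh t −1)} dt is strictly increasing on (0,∞), and for every integer d ≥ 2 the equation I_β · e^{β(2d−2)} · (2d−1) = 1 has a unique solution β_c^d ∈ (0,∞). -/

import Mathlib

open Real

noncomputable section

/-- `I_β = √β ∫_ℝ (2π)^{-1/2} e^{-β(cosh t - 1)} dt`. -/
def Ieta (β : ℝ) : ℝ :=
  Real.sqrt β * ∫ s : ℝ, (Real.sqrt (2 * Real.pi))⁻¹ * Real.exp (-β * (Real.cosh s - 1))


lemma sinh_lt_mul_cosh {x : ℝ} (hx : 0 < x) : sinh x < x * cosh x := by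
  have h : StrictMonoOn (fun x : ℝ => x * cosh x - sinh x) (Set.Ici 0) := by
    refine strictMonoOn_of_deriv_pos (convex_Ici _) (by fun_prop) fun y hy => ?_
    rw [interior_Ici, Set.mem_Ioi] at hy
    have : HasDerivAt (fun x : ℝ => x * cosh x - sinh x) (y * sinh y) y := by
      have := ((hasDerivAt_id y).mul (Real.hasDerivAt_cosh y)).sub (Real.hasDerivAt_sinh y)
      exact this.congr_deriv (by simp)
    rw [this.deriv]
    exact mul_pos hy (Real.sinh_pos_iff.2 hy)
  have := h (Set.self_mem_Ici) (Set.mem_Ici.2 hx.le) hx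
  simpa using this

lemma two_cosh_lt {x : ℝ} (hx : 0 < x) : 2 * (cosh x - 1) < x * sinh x := by
  have h : StrictMonoOn (fun x : ℝ => x * sinh x - 2 * (cosh x - 1)) (Set.Ici 0) := by
    refine strictMonoOn_of_deriv_pos (convex_Ici _) (by fun_prop) fun y hy => ?_
    rw [interior_Ici, Set.mem_Ioi] at hy
    have : HasDerivAt (fun x : ℝ => x * sinh x - 2 * (cosh x - 1))
        (y * cosh y - sinh y) y := by
      have := ((hasDerivAt_id y).mul (Real.hasDerivAt_sinh y)).sub
        (((Real.hasDerivAt_cosh y).sub_const 1).const_mul 2)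
      exact this.congr_deriv (by
        show (1:ℝ) * sinh y + y * cosh y - 2 * sinh y = y * cosh y - sinh y
        ring)
    rw [this.deriv]
    exact sub_pos.2 (sinh_lt_mul_cosh hy)
  have := h (Set.self_mem_Ici) (Set.mem_Ici.2 hx.le) hx
  simpa using this

lemma hfun_strictMono : StrictMonoOn (fun x : ℝ => (cosh x - 1) / x ^ 2) (Set.Ioi 0) := by
  refine strictMonoOn_of_deriv_pos (convex_Ioi _) ?_ fun y hy => ?_
  · exact ContinuousOn.div (by fun_prop) (by fun_prop)
      (fun x hx => pow_ne_zero _ (ne_of_gt hx))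
  · rw [interior_Ioi, Set.mem_Ioi] at hy
    have hy2 : (y : ℝ) ^ 2 ≠ 0 := pow_ne_zero _ hy.ne'
    have : HasDerivAt (fun x : ℝ => (cosh x - 1) / x ^ 2)
        ((sinh y * y ^ 2 - (cosh y - 1) * (2 * y ^ 1)) / (y ^ 2) ^ 2) y := by
      exact ((Real.hasDerivAt_cosh y).sub_const 1).div (hasDerivAt_pow 2 y) hy2
    rw [this.deriv]
    have hnum : 0 < sinh y * y ^ 2 - (cosh y - 1) * (2 * y ^ 1) := by
      have h2 := two_cosh_lt hy
      nlinarith [h2, hy]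
    positivity

lemma cosh_sub_one_eq (x : ℝ) : cosh x - 1 = 2 * sinh (x / 2) ^ 2 := by
  have h1 : cosh (2 * (x / 2)) = cosh (x / 2) ^ 2 + sinh (x / 2) ^ 2 := Real.cosh_two_mul _
  have h2 : cosh (x / 2) ^ 2 = sinh (x / 2) ^ 2 + 1 := by
    have := Real.cosh_sq (x / 2); linarith
  have : (2 : ℝ) * (x / 2) = x := by ring
  rw [this] at h1
  linarith

lemma sq_half_le_cosh_sub_one (x : ℝ) : x ^ 2 / 2 ≤ cosh x - 1 := by
  rw [cosh_sub_one_eq]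
  rcases le_or_gt 0 x with hx | hx
  · have h := Real.self_le_sinh_iff.2 (by positivity : (0:ℝ) ≤ x / 2)
    nlinarith [h, hx]
  · have h := Real.sinh_le_self_iff.2 (by linarith : x / 2 ≤ 0)
    nlinarith [h, hx]

lemma cube_le_sinh {y : ℝ} (hy : 0 ≤ y) : y ^ 3 / 6 ≤ sinh y := by
  have h : MonotoneOn (fun y : ℝ => sinh y - y ^ 3 / 6) (Set.Ici 0) := by
    refine monotoneOn_of_deriv_nonneg (convex_Ici _) (by fun_prop) (by fun_prop) fun z hz => ?_
    rw [interior_Ici, Set.mem_Ioi] at hz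
    have hd : HasDerivAt (fun y : ℝ => sinh y - y ^ 3 / 6) (cosh z - 3 * z ^ 2 / 6) z := by
      have := (Real.hasDerivAt_sinh z).sub (((hasDerivAt_pow 3 z).div_const 6))
      exact this.congr_deriv (by norm_num)
    rw [hd.deriv]
    have := sq_half_le_cosh_sub_one z
    linarith
  have := h Set.self_mem_Ici (Set.mem_Ici.2 hy) hy
  simpa using this

lemma pow6_le_cosh_sub_one (x : ℝ) : x ^ 6 / 1152 ≤ cosh x - 1 := by
  have h1 : cosh x - 1 = 2 * sinh (|x| / 2) ^ 2 := by
    rw [← Real.cosh_abs, cosh_sub_one_eq]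
  have h2 := cube_le_sinh (by positivity : (0:ℝ) ≤ |x| / 2)
  have h3 : (0:ℝ) ≤ (|x| / 2) ^ 3 / 6 := by positivity
  have h4 : (|x|) ^ 6 = x ^ 6 := by
    rw [← abs_pow]; exact abs_of_nonneg (by positivity)
  nlinarith [h2, h3, h4]

lemma key_lt {a b u : ℝ} (hb : 0 < b) (hba : b < a) (hu : u ≠ 0) :
    (cosh (b * u) - 1) / b ^ 2 < (cosh (a * u) - 1) / a ^ 2 := by
  have ha : 0 < a := hb.trans hba
  have hv : 0 < |u| := abs_pos.2 hu
  have hcb : cosh (b * u) = cosh (b * |u|) := by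
    rw [← Real.cosh_abs (b * u), abs_mul, abs_of_pos hb]
  have hca : cosh (a * u) = cosh (a * |u|) := by
    rw [← Real.cosh_abs (a * u), abs_mul, abs_of_pos ha]
  have hmem1 : b * |u| ∈ Set.Ioi (0:ℝ) := by exact mul_pos hb hv
  have hmem2 : a * |u| ∈ Set.Ioi (0:ℝ) := by exact mul_pos ha hv
  have h := hfun_strictMono hmem1 hmem2 (by exact mul_lt_mul_of_pos_right hba hv)
  simp only at h
  have e1 : (cosh (b * |u|) - 1) / b ^ 2
      = |u| ^ 2 * ((cosh (b * |u|) - 1) / (b * |u|) ^ 2) := by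
    field_simp
  have e2 : (cosh (a * |u|) - 1) / a ^ 2
      = |u| ^ 2 * ((cosh (a * |u|) - 1) / (a * |u|) ^ 2) := by
    field_simp
  rw [hcb, hca, e1, e2]
  exact mul_lt_mul_of_pos_left h (by positivity)

noncomputable def gint (β : ℝ) (u : ℝ) : ℝ :=
  (Real.sqrt (2 * π))⁻¹ * Real.exp (-(β * (Real.cosh (u * (Real.sqrt β)⁻¹) - 1)))

lemma c_pos : 0 < (Real.sqrt (2 * π))⁻¹ := by
  have : 0 < Real.sqrt (2 * π) := Real.sqrt_pos.2 (by positivity)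
  positivity

lemma gint_pos (β u : ℝ) : 0 < gint β u := by
  unfold gint; positivity

lemma beta_mono {β₁ β₂ u : ℝ} (h1 : 0 < β₁) (h12 : β₁ < β₂) (hu : u ≠ 0) :
    β₂ * (cosh (u * (Real.sqrt β₂)⁻¹) - 1) < β₁ * (cosh (u * (Real.sqrt β₁)⁻¹) - 1) := by
  have h2 : 0 < β₂ := h1.trans h12
  set a := (Real.sqrt β₁)⁻¹ with ha_def
  set b := (Real.sqrt β₂)⁻¹ with hb_def
  have hs1 : 0 < Real.sqrt β₁ := Real.sqrt_pos.2 h1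
  have hs2 : 0 < Real.sqrt β₂ := Real.sqrt_pos.2 h2
  have hb : 0 < b := by positivity
  have hba : b < a := by
    exact inv_strictAnti₀ hs1 ((Real.sqrt_lt_sqrt h1.le h12))
  have key := key_lt hb hba hu
  have ea : a ^ 2 = β₁⁻¹ := by
    rw [ha_def, inv_pow, Real.sq_sqrt h1.le]
  have eb : b ^ 2 = β₂⁻¹ := by
    rw [hb_def, inv_pow, Real.sq_sqrt h2.le]
  rw [ea, eb, div_eq_mul_inv, div_eq_mul_inv, inv_inv, inv_inv, mul_comm b u, mul_comm a u] at key
  linarith [key]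

lemma half_sq_le {β : ℝ} (hβ : 0 < β) (u : ℝ) :
    1 / 2 * u ^ 2 ≤ β * (cosh (u * (Real.sqrt β)⁻¹) - 1) := by
  have h := sq_half_le_cosh_sub_one (u * (Real.sqrt β)⁻¹)
  have hs : Real.sqrt β ^ 2 = β := Real.sq_sqrt hβ.le
  have e : (u * (Real.sqrt β)⁻¹) ^ 2 = u ^ 2 / β := by
    rw [mul_pow, inv_pow, hs, div_eq_mul_inv]
  rw [e] at h
  have := mul_le_mul_of_nonneg_left h hβ.le
  calc 1 / 2 * u ^ 2 = β * (u ^ 2 / β / 2) := by field_simp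
  _ ≤ β * (cosh (u * (Real.sqrt β)⁻¹) - 1) := this

lemma pow6_le {β : ℝ} (hβ : 0 < β) (u : ℝ) :
    u ^ 6 / (1152 * β ^ 2) ≤ β * (cosh (u * (Real.sqrt β)⁻¹) - 1) := by
  have h := pow6_le_cosh_sub_one (u * (Real.sqrt β)⁻¹)
  have hs : Real.sqrt β ^ 2 = β := Real.sq_sqrt hβ.le
  have e : (u * (Real.sqrt β)⁻¹) ^ 6 = u ^ 6 / β ^ 3 := by
    rw [mul_pow, inv_pow, show (Real.sqrt β) ^ 6 = (Real.sqrt β ^ 2) ^ 3 by ring, hs,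
      div_eq_mul_inv]
  rw [e] at h
  have := mul_le_mul_of_nonneg_left h hβ.le
  calc u ^ 6 / (1152 * β ^ 2) = β * (u ^ 6 / β ^ 3 / 1152) := by field_simp
  _ ≤ β * (cosh (u * (Real.sqrt β)⁻¹) - 1) := this

noncomputable def gauss (u : ℝ) : ℝ := (Real.sqrt (2 * π))⁻¹ * Real.exp (-(1 / 2) * u ^ 2)

lemma gauss_integrable : MeasureTheory.Integrable gauss := by
  exact (integrable_exp_neg_mul_sq (by norm_num : (0:ℝ) < 1 / 2)).const_mul _

lemma gint_le_gauss {β : ℝ} (hβ : 0 < β) (u : ℝ) : gint β u ≤ gauss u := by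
  unfold gint gauss
  refine mul_le_mul_of_nonneg_left ?_ c_pos.le
  apply Real.exp_le_exp.2
  have := half_sq_le hβ u
  linarith

lemma gint_continuous (β : ℝ) : Continuous (gint β) := by
  unfold gint; fun_prop

lemma gint_integrable {β : ℝ} (hβ : 0 < β) : MeasureTheory.Integrable (gint β) := by
  refine gauss_integrable.mono (gint_continuous β).aestronglyMeasurable ?_
  refine MeasureTheory.ae_of_all _ fun u => ?_
  rw [Real.norm_of_nonneg (gint_pos β u).le, Real.norm_of_nonneg (by unfold gauss; positivity)]
  exact gint_le_gauss hβ u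

lemma Ieta_eq {β : ℝ} (hβ : 0 < β) : Ieta β = ∫ u : ℝ, gint β u := by
  have h := MeasureTheory.Measure.integral_comp_div
    (fun s : ℝ => (Real.sqrt (2 * π))⁻¹ * Real.exp (-β * (Real.cosh s - 1))) (Real.sqrt β)
  have hs : 0 < Real.sqrt β := Real.sqrt_pos.2 hβ
  have e : (fun x : ℝ => (Real.sqrt (2 * π))⁻¹ *
      Real.exp (-β * (Real.cosh (x / Real.sqrt β) - 1))) = gint β := by
    funext x
    unfold gint
    rw [div_eq_mul_inv, neg_mul]
  unfold Ieta
  rw [← e]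
  rw [h, abs_of_pos hs, smul_eq_mul]

lemma gint_lt_gint {β₁ β₂ u : ℝ} (h1 : 0 < β₁) (h12 : β₁ < β₂) (hu : u ≠ 0) :
    gint β₁ u < gint β₂ u := by
  unfold gint
  exact mul_lt_mul_of_pos_left
    (Real.exp_lt_exp.2 (neg_lt_neg (beta_mono h1 h12 hu))) c_pos

lemma gint_le_gint {β₁ β₂ : ℝ} (h1 : 0 < β₁) (h12 : β₁ < β₂) (u : ℝ) :
    gint β₁ u ≤ gint β₂ u := by
  by_cases hu : u = 0
  · subst hu; unfold gint; simp
  · exact (gint_lt_gint h1 h12 hu).le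

lemma Ieta_strictMono : StrictMonoOn Ieta (Set.Ioi 0) := by
  intro β₁ h1 β₂ h2 h12
  rw [Set.mem_Ioi] at h1 h2
  rw [Ieta_eq h1, Ieta_eq h2]
  have hint1 := gint_integrable h1
  have hint2 := gint_integrable h2
  have key : 0 < ∫ u : ℝ, (gint β₂ u - gint β₁ u) := by
    refine (MeasureTheory.integral_pos_iff_support_of_nonneg
      (fun u => sub_nonneg.2 (gint_le_gint h1 h12 u)) (hint2.sub hint1)).2 ?_
    have hsub : Set.Ioi (0:ℝ) ⊆ Function.support fun u => gint β₂ u - gint β₁ u := by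
      intro u hu
      exact (sub_pos.2 (gint_lt_gint h1 h12 (ne_of_gt hu))).ne'
    calc (0:ENNReal) < MeasureTheory.volume (Set.Ioi (0:ℝ)) := by
          rw [Real.volume_Ioi]; exact ENNReal.zero_lt_top
    _ ≤ _ := MeasureTheory.measure_mono hsub
  rw [MeasureTheory.integral_sub hint2 hint1] at key
  linarith

lemma Ieta_pos {β : ℝ} (hβ : 0 < β) : 0 < Ieta β := by
  rw [Ieta_eq hβ]
  refine (MeasureTheory.integral_pos_iff_support_of_nonneg
    (fun u => (gint_pos β u).le) (gint_integrable hβ)).2 ?_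
  have : Function.support (gint β) = Set.univ :=
    Set.eq_univ_of_forall fun u => (gint_pos β u).ne'
  rw [this]
  simp

lemma integral_gint_continuousAt {β₀ : ℝ} (hβ : 0 < β₀) :
    ContinuousAt (fun β => ∫ u : ℝ, gint β u) β₀ := by
  have hev : ∀ᶠ β in nhds β₀, 0 < β := eventually_gt_nhds hβ
  refine MeasureTheory.continuousAt_of_dominated
    (Filter.Eventually.of_forall fun β => (gint_continuous β).aestronglyMeasurable)
    ?_ gauss_integrable ?_
  · filter_upwards [hev] with β hb
    refine MeasureTheory.ae_of_all _ fun u => ?_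
    rw [Real.norm_of_nonneg (gint_pos β u).le]
    exact gint_le_gauss hb u
  · refine MeasureTheory.ae_of_all _ fun u => ?_
    unfold gint
    have hs : Real.sqrt β₀ ≠ 0 := (Real.sqrt_pos.2 hβ).ne'
    have h1 : ContinuousAt (fun β : ℝ => (Real.sqrt β)⁻¹) β₀ :=
      (Real.continuous_sqrt.continuousAt).inv₀ hs
    have h2 : ContinuousAt (fun β : ℝ => u * (Real.sqrt β)⁻¹) β₀ :=
      continuousAt_const.mul h1
    have h3 : ContinuousAt (fun β : ℝ => Real.cosh (u * (Real.sqrt β)⁻¹) - 1) β₀ :=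
      (Real.continuous_cosh.continuousAt.comp h2).sub continuousAt_const
    have h4 : ContinuousAt (fun β : ℝ => β * (Real.cosh (u * (Real.sqrt β)⁻¹) - 1)) β₀ :=
      continuousAt_id.mul h3
    exact continuousAt_const.mul (Real.continuous_exp.continuousAt.comp h4.neg)

lemma Ieta_continuousAt {β₀ : ℝ} (hβ : 0 < β₀) : ContinuousAt Ieta β₀ := by
  refine (integral_gint_continuousAt hβ).congr ?_
  filter_upwards [eventually_gt_nhds hβ] with β hb
  exact (Ieta_eq hb).symm

lemma gint_tendsto_zero {u : ℝ} (hu : u ≠ 0) :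
    Filter.Tendsto (fun β => gint β u) (nhdsWithin 0 (Set.Ioi 0)) (nhds 0) := by
  have hbig : Filter.Tendsto (fun β : ℝ => u ^ 6 / 1152 * (β ^ 2)⁻¹)
      (nhdsWithin 0 (Set.Ioi 0)) Filter.atTop := by
    have hsq : Filter.Tendsto (fun β : ℝ => β ^ 2)
        (nhdsWithin 0 (Set.Ioi 0)) (nhdsWithin 0 (Set.Ioi 0)) := by
      refine tendsto_nhdsWithin_of_tendsto_nhds_of_eventually_within _ ?_ ?_
      · have : Filter.Tendsto (fun β : ℝ => β ^ 2) (nhds 0) (nhds 0) := by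
          have := (continuous_pow 2 (M := ℝ)).tendsto 0
          simpa using this
        exact this.mono_left nhdsWithin_le_nhds
      · filter_upwards [self_mem_nhdsWithin] with β hb
        exact pow_pos (show (0:ℝ) < β from hb) 2
    have hinv := tendsto_inv_nhdsGT_zero.comp hsq
    exact Filter.Tendsto.const_mul_atTop (by positivity) hinv
  have hexp : Filter.Tendsto (fun β : ℝ => (Real.sqrt (2 * π))⁻¹ *
      Real.exp (-(u ^ 6 / 1152 * (β ^ 2)⁻¹))) (nhdsWithin 0 (Set.Ioi 0)) (nhds 0) := by
    have := (Real.tendsto_exp_neg_atTop_nhds_zero.comp hbig).const_mul (Real.sqrt (2 * π))⁻¹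
    simpa using this
  refine tendsto_of_tendsto_of_tendsto_of_le_of_le' tendsto_const_nhds hexp ?_ ?_
  · exact Filter.Eventually.of_forall fun β => (gint_pos β u).le
  · filter_upwards [self_mem_nhdsWithin] with β hb
    unfold gint
    refine mul_le_mul_of_nonneg_left ?_ c_pos.le
    apply Real.exp_le_exp.2
    have := pow6_le hb u
    have e : u ^ 6 / 1152 * (β ^ 2)⁻¹ = u ^ 6 / (1152 * β ^ 2) := by
      field_simp
    rw [e]
    linarith
  
lemma Ieta_tendsto_zero :
    Filter.Tendsto Ieta (nhdsWithin 0 (Set.Ioi 0)) (nhds 0) := by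
  have h : Filter.Tendsto (fun β => ∫ u : ℝ, gint β u)
      (nhdsWithin 0 (Set.Ioi 0)) (nhds (∫ _ : ℝ, (0:ℝ))) := by
    refine MeasureTheory.tendsto_integral_filter_of_dominated_convergence gauss
      (Filter.Eventually.of_forall fun β => (gint_continuous β).aestronglyMeasurable)
      ?_ gauss_integrable ?_
    · filter_upwards [self_mem_nhdsWithin] with β hb
      refine MeasureTheory.ae_of_all _ fun u => ?_
      rw [Real.norm_of_nonneg (gint_pos β u).le]
      exact gint_le_gauss hb u
    · have h0 : ∀ᵐ u : ℝ, u ≠ 0 := by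
        refine (MeasureTheory.ae_iff).2 ?_
        simpa using MeasureTheory.measure_singleton (0:ℝ)
      filter_upwards [h0] with u hu
      exact gint_tendsto_zero hu
  rw [MeasureTheory.integral_zero] at h
  refine h.congr' ?_
  filter_upwards [self_mem_nhdsWithin] with β hb
  exact (Ieta_eq hb).symm

/-- Theorem: `β ↦ I_β` is strictly increasing on `(0,∞)` and, for every integer `d ≥ 2`,
the equation `I_β e^{β(2d-2)} (2d-1) = 1` has a unique solution `β_c^d ∈ (0,∞)`. -/
theorem Ieta_strictMono_and_critical_point :
    StrictMonoOn Ieta (Set.Ioi 0) ∧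
    ∀ d : ℕ, 2 ≤ d →
      ∃! β : ℝ, 0 < β ∧
        Ieta β * Real.exp (β * (2 * (d : ℝ) - 2)) * (2 * (d : ℝ) - 1) = 1 := by
  refine ⟨Ieta_strictMono, fun d hd => ?_⟩
  have hd' : (2:ℝ) ≤ (d:ℝ) := by exact_mod_cast hd
  set e : ℝ := 2 * (d:ℝ) - 2 with he_def
  set c : ℝ := 2 * (d:ℝ) - 1 with hc_def
  have he : 2 ≤ e := by rw [he_def]; linarith
  have hc : 3 ≤ c := by rw [hc_def]; linarith
  set F : ℝ → ℝ := fun β => Ieta β * Real.exp (β * e) * c with hF_def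
  have hFmono : StrictMonoOn F (Set.Ioi 0) := by
    intro x hx y hy hxy
    rw [Set.mem_Ioi] at hx hy
    have h1 : Ieta x < Ieta y := Ieta_strictMono (Set.mem_Ioi.2 hx) (Set.mem_Ioi.2 hy) hxy
    have h2 : Real.exp (x * e) < Real.exp (y * e) := by
      apply Real.exp_lt_exp.2
      nlinarith
    have h3 : Ieta x * Real.exp (x * e) < Ieta y * Real.exp (y * e) :=
      mul_lt_mul'' h1 h2 (Ieta_pos hx).le (Real.exp_pos _).le
    exact mul_lt_mul_of_pos_right h3 (by linarith)
  have hIpos1 : 0 < Ieta 1 := Ieta_pos one_pos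
  set b : ℝ := max 1 (Ieta 1)⁻¹ with hb_def
  have hb1 : 1 ≤ b := le_max_left _ _
  have hbI : (Ieta 1)⁻¹ ≤ b := le_max_right _ _
  have hb0 : 0 < b := lt_of_lt_of_le one_pos hb1
  have hFb : 1 < F b := by
    have h1 : Ieta 1 ≤ Ieta b :=
      Ieta_strictMono.monotoneOn (Set.mem_Ioi.2 one_pos) (Set.mem_Ioi.2 hb0) hb1
    have h3 : b * e + 1 ≤ Real.exp (b * e) := by
      have := Real.add_one_le_exp (b * e)
      linarith
    have h6 : 1 ≤ Ieta 1 * b := by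
      calc (1:ℝ) = Ieta 1 * (Ieta 1)⁻¹ := (mul_inv_cancel₀ hIpos1.ne').symm
      _ ≤ Ieta 1 * b := mul_le_mul_of_nonneg_left hbI hIpos1.le
    have e1 : (2:ℝ) ≤ Ieta 1 * (b * e + 1) := by
      nlinarith [mul_le_mul_of_nonneg_right h6 (by linarith : (0:ℝ) ≤ e), hIpos1, he]
    have e2 : Ieta 1 * (b * e + 1) ≤ Ieta b * Real.exp (b * e) := by
      refine mul_le_mul h1 h3 (by nlinarith) (by linarith)
    have e3 : (2:ℝ) * 3 ≤ (Ieta b * Real.exp (b * e)) * c := by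
      refine mul_le_mul (by linarith) hc (by norm_num) (by nlinarith)
    show 1 < Ieta b * Real.exp (b * e) * c
    linarith
  have hFt : Filter.Tendsto F (nhdsWithin 0 (Set.Ioi 0)) (nhds 0) := by
    have hexp : Filter.Tendsto (fun β : ℝ => Real.exp (β * e))
        (nhdsWithin 0 (Set.Ioi 0)) (nhds 1) := by
      have hcont : Continuous (fun β : ℝ => Real.exp (β * e)) :=
        Real.continuous_exp.comp (continuous_id.mul continuous_const)
      have h := (hcont.tendsto 0).mono_left
        (nhdsWithin_le_nhds (s := Set.Ioi (0:ℝ)))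
      simpa using h
    have := (Ieta_tendsto_zero.mul hexp).mul_const c
    simpa using this
  have h1ev : ∀ᶠ β in nhdsWithin 0 (Set.Ioi 0), F β < 1 :=
    hFt.eventually_lt_const one_pos
  have h2ev : ∀ᶠ β in nhdsWithin 0 (Set.Ioi 0), β < b :=
    (eventually_lt_nhds hb0).filter_mono nhdsWithin_le_nhds
  obtain ⟨a, ⟨hFa, hab⟩, ha0⟩ := ((h1ev.and h2ev).and self_mem_nhdsWithin).exists
  have hcontF : ContinuousOn F (Set.Icc a b) := by
    intro x hx
    have hx0 : 0 < x := lt_of_lt_of_le ha0 hx.1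
    exact (((Ieta_continuousAt hx0).mul
      ((Real.continuous_exp.comp (continuous_id.mul continuous_const)).continuousAt)).mul
      continuousAt_const).continuousWithinAt
  have hmem : (1:ℝ) ∈ Set.Icc (F a) (F b) := ⟨hFa.le, hFb.le⟩
  obtain ⟨β, hβmem, hβeq⟩ := intermediate_value_Icc hab.le hcontF hmem
  have hβ0 : 0 < β := lt_of_lt_of_le ha0 hβmem.1
  refine ⟨β, ⟨hβ0, hβeq⟩, ?_⟩
  rintro y ⟨hy0, hyeq⟩
  exact hFmono.injOn (Set.mem_Ioi.2 hy0) (Set.mem_Ioi.2 hβ0) (by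
    show F y = F β
    rw [hβeq]; exact hyeq)
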